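/- arXiv:2509.11208 — 2 statements merged into one kernel-verified Lean document; each statement's English description precedes it below -/
import Mathlib

section
/- Let n ≥ 1, let a ∈ ℝ, let w : {1,…,n} → ℝ be nonnegative weights with Σ_{i=1}^n w_i = 1, and let ψ : {1,…,n} → ℝ. For each permutation π of {1,…,n} define q_π = σ(a + Σ_{i=1}^n w_i·ψ(π(i))), where σ is the logistic function. Then the average of |q_π − q_{π'}| over two independent uniformly random permutations π, π' of {1,…,n} satisfies E_{π,π'}|q_π − q_{π'}| ≤ (1/4)·E_{U,V}|ψ(U) − ψ(V)|, where U and V are independent and each uniformly distributed on {1,…,n}. -/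
/-- The logistic (sigmoid) function `σ(t) = 1 / (1 + e^{-t})`. -/
noncomputable def logistic (t : ℝ) : ℝ := 1 / (1 + Real.exp (-t))

lemma hasDerivAt_logistic (t : ℝ) :
    HasDerivAt logistic (Real.exp (-t) / (1 + Real.exp (-t)) ^ 2) t := by
  have h1 : HasDerivAt (fun t : ℝ => 1 + Real.exp (-t)) (-Real.exp (-t)) t := by
    simpa using ((Real.hasDerivAt_exp (-t)).comp t (hasDerivAt_neg t)).const_add 1
  have hne : (1 + Real.exp (-t)) ≠ 0 := by positivity
  have heq : logistic = fun y => (1 + Real.exp (-y))⁻¹ := by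
    funext y; simp [logistic, one_div]
  rw [heq]
  simpa using h1.fun_inv hne

lemma logistic_lip (x y : ℝ) : |logistic x - logistic y| ≤ (1/4) * |x - y| := by
  have key : ∀ t : ℝ, Real.exp (-t) / (1 + Real.exp (-t)) ^ 2 ≤ 1/4 := by
    intro t
    have h := Real.exp_pos (-t)
    rw [div_le_iff₀ (by positivity)]
    nlinarith [sq_nonneg (1 - Real.exp (-t))]
  have := Convex.norm_image_sub_le_of_norm_hasDerivWithin_le
    (f := logistic) (f' := fun t => Real.exp (-t) / (1 + Real.exp (-t)) ^ 2)
    (fun t _ => (hasDerivAt_logistic t).hasDerivWithinAt)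
    (fun t _ => by simpa [Real.norm_eq_abs, abs_of_nonneg (by positivity : (0:ℝ) ≤ Real.exp (-t) / (1 + Real.exp (-t)) ^ 2)] using key t)
    convex_univ (Set.mem_univ y) (Set.mem_univ x)
  simpa [Real.norm_eq_abs] using this

lemma sum_perm_apply {m : ℕ} (g : Fin (m+1) → ℝ) (i : Fin (m+1)) :
    ∑ π : Equiv.Perm (Fin (m+1)), g (π i) = (Nat.factorial m : ℝ) * ∑ u, g u := by
  have h0 : ∑ π : Equiv.Perm (Fin (m+1)), g (π i)
      = ∑ π : Equiv.Perm (Fin (m+1)), g (π 0) := by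
    rw [← Equiv.sum_comp (Equiv.mulRight (Equiv.swap (0 : Fin (m+1)) i))
      (fun π => g (π i))]
    simp [Equiv.Perm.mul_apply, Equiv.swap_apply_right]
  rw [h0, ← Equiv.sum_comp (Equiv.Perm.decomposeFin (n := m)).symm (fun π => g (π 0))]
  simp [Fintype.sum_prod_type, Equiv.Perm.decomposeFin_symm_apply_zero,
    Finset.sum_const, Fintype.card_perm]
  rw [← Finset.mul_sum]

lemma sum_Icc_one (k : ℕ) (f : ℕ → ℝ) :
    ∑ u ∈ Finset.Icc 1 k, f u = ∑ u : Fin k, f ((u:ℕ)+1) := by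
  have himg : Finset.Icc 1 k = Finset.image (· + 1) (Finset.range k) := by
    ext x
    simp only [Finset.mem_Icc, Finset.mem_image, Finset.mem_range]
    constructor
    · rintro ⟨h1, h2⟩; exact ⟨x - 1, by omega, by omega⟩
    · rintro ⟨b, hb, rfl⟩; omega
  rw [himg, Finset.sum_image (by intro a _ b _ h; dsimp only at h; omega),
    Fin.sum_univ_eq_sum_range (fun u => f (u+1))]

/-- The prediction under permutation `π`: `q_π = σ(a + ∑_i w_i·ψ(pos_π(i)))`, where the
position of chunk `i` in `{1,…,n}` is encoded as `(π i : ℕ) + 1` for `π` a permutation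
of `Fin n`. -/
noncomputable def qperm (n : ℕ) (a : ℝ) (w : Fin n → ℝ) (ψ : ℕ → ℝ)
    (π : Equiv.Perm (Fin n)) : ℝ :=
  logistic (a + ∑ i : Fin n, w i * ψ ((π i : ℕ) + 1))

set_option maxHeartbeats 1000000 in
/-- **Core reduction step of the Quantified Martingale Violation theorem.**
For nonnegative weights summing to 1, the average of `|q_π − q_{π'}|` over two independent
uniform permutations is at most `(1/4)·E_{U,V}|ψ(U) − ψ(V)|` with `U, V` i.i.d. uniform
on `{1,…,n}`. -/
theorem perm_pairwise_reduction (n : ℕ) (hn : 1 ≤ n) (a : ℝ) (w : Fin n → ℝ) (ψ : ℕ → ℝ)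
    (hw0 : ∀ i, 0 ≤ w i) (hw1 : ∑ i, w i = 1) :
    (1 / ((Nat.factorial n : ℝ)) ^ 2) *
        ∑ π : Equiv.Perm (Fin n), ∑ π' : Equiv.Perm (Fin n),
          |qperm n a w ψ π - qperm n a w ψ π'| ≤
      (1 / 4) * ((1 / (n : ℝ) ^ 2) *
        ∑ u ∈ Finset.Icc 1 n, ∑ v ∈ Finset.Icc 1 n, |ψ u - ψ v|) := by
  obtain ⟨m, rfl⟩ : ∃ m, n = m + 1 := ⟨n - 1, (Nat.succ_pred_eq_of_pos hn).symm⟩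
  set T : ℝ := ∑ u : Fin (m+1), ∑ v : Fin (m+1), |ψ ((u:ℕ)+1) - ψ ((v:ℕ)+1)| with hT
  have hTnn : 0 ≤ T := Finset.sum_nonneg fun u _ =>
    Finset.sum_nonneg fun v _ => abs_nonneg _
  -- pointwise Lipschitz bound
  have hpoint : ∀ π π' : Equiv.Perm (Fin (m+1)),
      |qperm (m+1) a w ψ π - qperm (m+1) a w ψ π'| ≤
        (1/4) * ∑ i, w i * |ψ ((π i:ℕ)+1) - ψ ((π' i:ℕ)+1)| := by
    intro π π'
    have h1 := logistic_lip (a + ∑ i, w i * ψ ((π i:ℕ)+1)) (a + ∑ i, w i * ψ ((π' i:ℕ)+1))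
    have h2 : (a + ∑ i, w i * ψ ((π i:ℕ)+1)) - (a + ∑ i, w i * ψ ((π' i:ℕ)+1))
        = ∑ i, w i * (ψ ((π i:ℕ)+1) - ψ ((π' i:ℕ)+1)) := by
      rw [add_sub_add_left_eq_sub, ← Finset.sum_sub_distrib]
      exact Finset.sum_congr rfl fun i _ => (mul_sub _ _ _).symm
    refine (h1.trans ?_)
    rw [h2]
    have h3 : |∑ i, w i * (ψ ((π i:ℕ)+1) - ψ ((π' i:ℕ)+1))|
        ≤ ∑ i, w i * |ψ ((π i:ℕ)+1) - ψ ((π' i:ℕ)+1)| := by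
      refine (Finset.abs_sum_le_sum_abs _ _).trans ?_
      refine Finset.sum_le_sum fun i _ => ?_
      rw [abs_mul, abs_of_nonneg (hw0 i)]
    linarith
  -- double-sum identity
  have inner : ∀ i : Fin (m+1),
      ∑ π : Equiv.Perm (Fin (m+1)), ∑ π' : Equiv.Perm (Fin (m+1)),
        |ψ ((π i:ℕ)+1) - ψ ((π' i:ℕ)+1)| = (m.factorial:ℝ)^2 * T := by
    intro i
    have step1 : ∀ π : Equiv.Perm (Fin (m+1)),
        ∑ π' : Equiv.Perm (Fin (m+1)), |ψ ((π i:ℕ)+1) - ψ ((π' i:ℕ)+1)|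
          = (m.factorial:ℝ) * ∑ v : Fin (m+1), |ψ ((π i:ℕ)+1) - ψ ((v:ℕ)+1)| :=
      fun π => sum_perm_apply (fun v => |ψ ((π i:ℕ)+1) - ψ ((v:ℕ)+1)|) i
    simp only [step1]
    rw [← Finset.mul_sum, Finset.sum_comm]
    have step2 : ∀ v : Fin (m+1),
        ∑ π : Equiv.Perm (Fin (m+1)), |ψ ((π i:ℕ)+1) - ψ ((v:ℕ)+1)|
          = (m.factorial:ℝ) * ∑ u : Fin (m+1), |ψ ((u:ℕ)+1) - ψ ((v:ℕ)+1)| :=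
      fun v => sum_perm_apply (fun u => |ψ ((u:ℕ)+1) - ψ ((v:ℕ)+1)|) i
    simp only [step2]
    rw [← Finset.mul_sum, Finset.sum_comm, ← hT]
    ring
  have hdouble : ∑ π : Equiv.Perm (Fin (m+1)), ∑ π' : Equiv.Perm (Fin (m+1)),
      (∑ i, w i * |ψ ((π i:ℕ)+1) - ψ ((π' i:ℕ)+1)|) = (m.factorial:ℝ)^2 * T := by
    have swap1 : ∑ π : Equiv.Perm (Fin (m+1)), ∑ π' : Equiv.Perm (Fin (m+1)),
        (∑ i, w i * |ψ ((π i:ℕ)+1) - ψ ((π' i:ℕ)+1)|)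
        = ∑ i, ∑ π : Equiv.Perm (Fin (m+1)), ∑ π' : Equiv.Perm (Fin (m+1)),
            w i * |ψ ((π i:ℕ)+1) - ψ ((π' i:ℕ)+1)| := by
      have s1 : ∑ π : Equiv.Perm (Fin (m+1)), ∑ π' : Equiv.Perm (Fin (m+1)),
          (∑ i, w i * |ψ ((π i:ℕ)+1) - ψ ((π' i:ℕ)+1)|)
          = ∑ π : Equiv.Perm (Fin (m+1)), ∑ i, ∑ π' : Equiv.Perm (Fin (m+1)),
              w i * |ψ ((π i:ℕ)+1) - ψ ((π' i:ℕ)+1)| :=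
        Finset.sum_congr rfl fun π _ => Finset.sum_comm
      have s2 : ∑ π : Equiv.Perm (Fin (m+1)), ∑ i, ∑ π' : Equiv.Perm (Fin (m+1)),
          w i * |ψ ((π i:ℕ)+1) - ψ ((π' i:ℕ)+1)|
          = ∑ i, ∑ π : Equiv.Perm (Fin (m+1)), ∑ π' : Equiv.Perm (Fin (m+1)),
              w i * |ψ ((π i:ℕ)+1) - ψ ((π' i:ℕ)+1)| := Finset.sum_comm
      exact s1.trans s2
    rw [swap1]
    have : ∀ i : Fin (m+1), ∑ π : Equiv.Perm (Fin (m+1)), ∑ π' : Equiv.Perm (Fin (m+1)),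
        w i * |ψ ((π i:ℕ)+1) - ψ ((π' i:ℕ)+1)| = w i * ((m.factorial:ℝ)^2 * T) := by
      intro i
      simp only [← Finset.mul_sum]
      rw [inner i]
    simp only [this, ← Finset.sum_mul, hw1, one_mul]
  -- Icc sum equals Fin sum
  have hIcc : ∑ u ∈ Finset.Icc 1 (m+1), ∑ v ∈ Finset.Icc 1 (m+1), |ψ u - ψ v| = T := by
    rw [hT, sum_Icc_one]
    exact Finset.sum_congr rfl fun u _ => sum_Icc_one _ _
  rw [hIcc]
  have hstep : (1 / ((Nat.factorial (m+1) : ℝ)) ^ 2) *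
      ∑ π : Equiv.Perm (Fin (m+1)), ∑ π' : Equiv.Perm (Fin (m+1)),
        |qperm (m+1) a w ψ π - qperm (m+1) a w ψ π'|
      ≤ (1 / ((Nat.factorial (m+1) : ℝ)) ^ 2) * ((1/4) * ((m.factorial:ℝ)^2 * T)) := by
    refine mul_le_mul_of_nonneg_left ?_ (by positivity)
    calc ∑ π : Equiv.Perm (Fin (m+1)), ∑ π' : Equiv.Perm (Fin (m+1)),
          |qperm (m+1) a w ψ π - qperm (m+1) a w ψ π'|
        ≤ ∑ π : Equiv.Perm (Fin (m+1)), ∑ π' : Equiv.Perm (Fin (m+1)),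
            (1/4) * ∑ i, w i * |ψ ((π i:ℕ)+1) - ψ ((π' i:ℕ)+1)| := by
          refine Finset.sum_le_sum fun π _ => Finset.sum_le_sum fun π' _ => hpoint π π'
      _ = (1/4) * ((m.factorial:ℝ)^2 * T) := by
          simp only [← Finset.mul_sum]; rw [hdouble]
  refine hstep.trans (le_of_eq ?_)
  have hfact : ((m+1).factorial : ℝ) = ((m:ℝ)+1) * (m.factorial : ℝ) := by
    rw [Nat.factorial_succ]; push_cast; ring
  have hm0 : (m.factorial : ℝ) ≠ 0 := Nat.cast_ne_zero.mpr m.factorial_ne_zero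
  have hm1 : ((m:ℝ)+1) ≠ 0 := by positivity
  rw [hfact]
  push_cast
  field_simp
end

section
/- Let Y be a nonempty finite type, let S̄ be a probability mass function on Y with S̄(y) > 0 for all y, let A ⊆ Y with 0 < S̄(A) < 1, let λ ∈ ℝ, and define the exponentially tilted distribution P*(y) = S̄(y)·e^{λ·1_A(y)} / Z with Z = Σ_y S̄(y)·e^{λ·1_A(y)}. Then KL(P* ‖ S̄) = klBer(P*(A), S̄(A)), i.e., the EDFL lower bound holds with equality for the I-projection of S̄ onto the set of distributions assigning mass P*(A) to A. -/
/-- Kullback–Leibler divergence between probability mass functions on a finite type,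
`KL(P‖Q) = ∑_y P(y)·log(P(y)/Q(y))`, with the convention `0·log 0 = 0`. -/
noncomputable def KLf {Y : Type*} [Fintype Y] (P Q : Y → ℝ) : ℝ :=
  ∑ y, if P y = 0 then 0 else P y * Real.log (P y / Q y)

/-- Binary Kullback–Leibler divergence
`klBer(p,q) = p·log(p/q) + (1−p)·log((1−p)/(1−q))`, with the convention `0·log 0 = 0`. -/
noncomputable def klBer (p q : ℝ) : ℝ :=
  (if p = 0 then 0 else p * Real.log (p / q)) +
    (if p = 1 then 0 else (1 - p) * Real.log ((1 - p) / (1 - q)))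

/-- **Equality case of EDFL (I-projection).** For a strictly positive pmf `S̄` on a finite
type, an event `A` with `0 < S̄(A) < 1`, and the exponentially tilted distribution
`P*(y) = S̄(y)·e^{λ·1_A(y)} / Z`, we have `KL(P*‖S̄) = klBer(P*(A), S̄(A))`. -/
theorem edfl_equality (Y : Type*) [Fintype Y] [Nonempty Y] [DecidableEq Y]
    (Sbar : Y → ℝ) (hpos : ∀ y, 0 < Sbar y) (hsum : ∑ y, Sbar y = 1)
    (A : Finset Y) (hA0 : 0 < ∑ y ∈ A, Sbar y) (hA1 : ∑ y ∈ A, Sbar y < 1)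
    (lam : ℝ) (Z : ℝ)
    (hZ : Z = ∑ y, Sbar y * Real.exp (lam * (if y ∈ A then (1 : ℝ) else 0)))
    (Pstar : Y → ℝ)
    (hPstar : ∀ y, Pstar y = Sbar y * Real.exp (lam * (if y ∈ A then (1 : ℝ) else 0)) / Z) :
    KLf Pstar Sbar = klBer (∑ y ∈ A, Pstar y) (∑ y ∈ A, Sbar y) := by
  set a : ℝ := ∑ y ∈ A, Sbar y with ha
  have hcompl : ∑ y ∈ Aᶜ, Sbar y = 1 - a := by
    have := Finset.sum_add_sum_compl A Sbar
    rw [hsum] at this; linarith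
  -- Z = a * e^lam + (1 - a)
  have hZ' : Z = a * Real.exp lam + (1 - a) := by
    rw [hZ, ← Finset.sum_add_sum_compl A]
    have h1 : ∑ y ∈ A, Sbar y * Real.exp (lam * (if y ∈ A then (1 : ℝ) else 0))
        = a * Real.exp lam := by
      rw [ha, Finset.sum_mul]
      refine Finset.sum_congr rfl fun y hy => ?_
      rw [if_pos hy, mul_one]
    have h2 : ∑ y ∈ Aᶜ, Sbar y * Real.exp (lam * (if y ∈ A then (1 : ℝ) else 0))
        = 1 - a := by
      rw [← hcompl]
      refine Finset.sum_congr rfl fun y hy => ?_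
      rw [if_neg (Finset.mem_compl.mp hy), mul_zero, Real.exp_zero, mul_one]
    rw [h1, h2]
  have hZpos : 0 < Z := by
    rw [hZ']
    have := Real.exp_pos lam
    nlinarith
  have hZne : Z ≠ 0 := ne_of_gt hZpos
  have hPpos : ∀ y, 0 < Pstar y := fun y => by
    rw [hPstar y]
    exact div_pos (mul_pos (hpos y) (Real.exp_pos _)) hZpos
  -- total mass of Pstar is 1
  have hPsum : ∑ y, Pstar y = 1 := by
    have : ∑ y, Pstar y = (∑ y, Sbar y * Real.exp (lam * (if y ∈ A then (1 : ℝ) else 0))) / Z := by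
      rw [Finset.sum_div]; exact Finset.sum_congr rfl fun y _ => hPstar y
    rw [this, ← hZ, div_self hZne]
  -- p = a * e^lam / Z
  have hp : ∑ y ∈ A, Pstar y = a * Real.exp lam / Z := by
    rw [ha, Finset.sum_mul, Finset.sum_div]
    refine Finset.sum_congr rfl fun y hy => ?_
    rw [hPstar y, if_pos hy, mul_one]
  set p : ℝ := ∑ y ∈ A, Pstar y with hpdef
  have hppos : 0 < p := by
    rw [hp]
    exact div_pos (mul_pos hA0 (Real.exp_pos _)) hZpos
  have h1p : 1 - p = (1 - a) / Z := by
    rw [hp]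
    field_simp
    linarith [hZ']
  have hp1 : p < 1 := by
    have : 0 < (1 - a) / Z := div_pos (by linarith) hZpos
    linarith [h1p ▸ this]
  -- compute KL
  have hKL : KLf Pstar Sbar = lam * p - Real.log Z := by
    unfold KLf
    have : ∀ y : Y, (if Pstar y = 0 then 0 else Pstar y * Real.log (Pstar y / Sbar y))
        = Pstar y * (lam * (if y ∈ A then (1 : ℝ) else 0)) - Pstar y * Real.log Z := by
      intro y
      rw [if_neg (ne_of_gt (hPpos y))]
      have hratio : Pstar y / Sbar y = Real.exp (lam * (if y ∈ A then (1 : ℝ) else 0)) / Z := by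
        rw [hPstar y, div_right_comm, mul_div_cancel_left₀ _ (hpos y).ne']
      rw [hratio, Real.log_div (Real.exp_ne_zero _) hZne, Real.log_exp, mul_sub]
    rw [Finset.sum_congr rfl fun y _ => this y, Finset.sum_sub_distrib, ← Finset.sum_mul,
      hPsum, one_mul]
    congr 1
    have : ∀ y : Y, Pstar y * (lam * (if y ∈ A then (1 : ℝ) else 0))
        = lam * (if y ∈ A then Pstar y else 0) := by
      intro y; split <;> ring
    rw [Finset.sum_congr rfl fun y _ => this y, ← Finset.mul_sum,
      Finset.sum_ite_mem, Finset.univ_inter]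
  rw [hKL]
  unfold klBer
  rw [if_neg (ne_of_gt hppos), if_neg (ne_of_lt hp1)]
  have hpa : p / a = Real.exp lam / Z := by
    rw [hp, div_right_comm, mul_div_cancel_left₀ _ (ne_of_gt hA0)]
  have hlogp : Real.log (p / a) = lam - Real.log Z := by
    rw [hpa, Real.log_div (Real.exp_ne_zero _) hZne, Real.log_exp]
  have hlog1p : Real.log ((1 - p) / (1 - a)) = -Real.log Z := by
    rw [h1p, div_right_comm, div_self (by linarith : (1:ℝ) - a ≠ 0), one_div, Real.log_inv]
  rw [hlogp, hlog1p]
  ring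
end
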